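/- Let φ be a Bernstein function with φ(1) = 1, Lévy measure ν satisfying ν(dy) ≥ c y^{-1-α} dy for constants c > 0 and α ∈ (0,1), and let T be the associated discrete time subordinator. For θ > 0 and δ ∈ (0,1], there exists a constant C = C(θ,δ,c,α) > 0 such that E[exp(-θ T_n^δ)] ≤ exp(-C n^{δ/(α(1-δ)+δ)}) for all sufficiently large n. -/

import Mathlib

open MeasureTheory Set ProbabilityTheory Filter
open scoped ENNReal NNReal

lemma aux_lintegral_nat {Ω : Type*} [MeasurableSpace Ω] (μ : Measure Ω)
    (X : Ω → ℕ) (hX : Measurable X) (g : ℕ → ℝ≥0∞) :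
    ∫⁻ ω, g (X ω) ∂μ = ∑' m : ℕ, g m * μ {ω | X ω = m} := by
  rw [← lintegral_map measurable_from_nat hX, lintegral_countable']
  refine tsum_congr fun m => ?_
  rw [Measure.map_apply hX (measurableSet_singleton m)]
  rfl

lemma aux_icc (c α : ℝ) (hc : 0 ≤ c) (hα0 : 0 < α) {a b : ℝ} (ha : 0 < a) (hab : a ≤ b) :
    ∫⁻ y in Icc a b, ENNReal.ofReal (c * y ^ (-1-α)) =
      ENNReal.ofReal (c * (a^(-α) - b^(-α)) / α) := by
  have hcont : ContinuousOn (fun y : ℝ => c * y ^ (-1-α)) (Icc a b) :=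
    (continuousOn_id.rpow_const fun y hy => Or.inl (ne_of_gt (lt_of_lt_of_le ha hy.1))).const_smul c
  have hint : IntegrableOn (fun y : ℝ => c * y ^ (-1-α)) (Icc a b) :=
    hcont.integrableOn_compact isCompact_Icc
  rw [← ofReal_integral_eq_lintegral_ofReal hint ?_]
  · congr 1
    rw [integral_Icc_eq_integral_Ioc, ← intervalIntegral.integral_of_le hab,
      intervalIntegral.integral_const_mul,
      integral_rpow (Or.inr ⟨by linarith, fun h => absurd ((Set.uIcc_of_le hab ▸ h).1) (not_le.2 ha)⟩)]
    have h1 : -1 - α + 1 = -α := by ring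
    rw [h1, div_neg]
    ring
  · filter_upwards [ae_restrict_mem measurableSet_Icc] with y hy
    exact mul_nonneg hc (Real.rpow_nonneg (le_of_lt (lt_of_lt_of_le ha hy.1)) _)

lemma aux_J (c α : ℝ) (hc : 0 < c) (hα0 : 0 < α) {s : ℝ} (hs : 0 < s) :
    ENNReal.ofReal ((c * (1 - Real.exp (-1)) * (1 - 2 ^ (-α)) / α) * s ^ α) ≤
      ∫⁻ y in Ioi (0:ℝ),
        ENNReal.ofReal (1 - Real.exp (-(s*y))) * ENNReal.ofReal (c * y ^ (-1-α)) := by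
  set a := s⁻¹ with ha_def
  set b := 2 * s⁻¹ with hb_def
  have ha : 0 < a := inv_pos.2 hs
  have hab : a ≤ b := by rw [hb_def]; nlinarith
  have hsub : Icc a b ⊆ Ioi (0:ℝ) := fun y hy => lt_of_lt_of_le ha hy.1
  have h1 : ∫⁻ y in Icc a b,
        ENNReal.ofReal (1 - Real.exp (-(s*y))) * ENNReal.ofReal (c * y ^ (-1-α)) ≤
      ∫⁻ y in Ioi (0:ℝ),
        ENNReal.ofReal (1 - Real.exp (-(s*y))) * ENNReal.ofReal (c * y ^ (-1-α)) :=
    lintegral_mono' (Measure.restrict_mono hsub le_rfl) le_rfl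
  refine le_trans ?_ h1
  have h2 : ∫⁻ y in Icc a b,
        ENNReal.ofReal (1 - Real.exp (-1)) * ENNReal.ofReal (c * y ^ (-1-α)) ≤
      ∫⁻ y in Icc a b,
        ENNReal.ofReal (1 - Real.exp (-(s*y))) * ENNReal.ofReal (c * y ^ (-1-α)) := by
    refine lintegral_mono_ae ?_
    filter_upwards [ae_restrict_mem measurableSet_Icc] with y hy
    refine mul_le_mul_left (ENNReal.ofReal_le_ofReal ?_) _
    have h1y : (1:ℝ) ≤ s * y := by
      have h := mul_le_mul_of_nonneg_left hy.1 hs.le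
      rwa [ha_def, mul_inv_cancel₀ hs.ne'] at h
    have := Real.exp_le_exp.2 (neg_le_neg h1y)
    linarith
  refine le_trans ?_ h2
  rw [lintegral_const_mul' _ _ ENNReal.ofReal_ne_top, aux_icc c α hc.le hα0 ha hab]
  have hexp : (0:ℝ) ≤ 1 - Real.exp (-1) := by
    have : Real.exp (-1) ≤ 1 := Real.exp_le_one_iff.2 (by norm_num)
    linarith
  rw [← ENNReal.ofReal_mul hexp]
  refine ENNReal.ofReal_le_ofReal (le_of_eq ?_)
  have hainv : a ^ (-α) = s ^ α := by
    rw [ha_def, ← Real.rpow_neg_one s, ← Real.rpow_mul hs.le]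
    norm_num
  have hbinv : b ^ (-α) = 2 ^ (-α) * s ^ α := by
    rw [hb_def, Real.mul_rpow (by norm_num) (inv_nonneg.2 hs.le), ← ha_def, hainv]
  rw [hainv, hbinv]
  ring

lemma aux_exp_tsum (x : ℝ) : ∑' m : ℕ, x ^ m / m.factorial = Real.exp x := by
  rw [Real.exp_eq_exp_ℝ, NormedSpace.exp_eq_tsum_div]

lemma aux_series (lam y : ℝ) (hlam : 0 ≤ lam) (hy : 0 ≤ y) :
    ∑' m : ℕ, ENNReal.ofReal
        ((1 - Real.exp (-(lam * m))) * (y ^ m / m.factorial) * Real.exp (-y))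
      = ENNReal.ofReal (1 - Real.exp (-((1 - Real.exp (-lam)) * y))) := by
  have hnn : ∀ m : ℕ, 0 ≤ (1 - Real.exp (-(lam * m))) * (y ^ m / m.factorial) * Real.exp (-y) := by
    intro m
    have h1 : Real.exp (-(lam * m)) ≤ 1 :=
      Real.exp_le_one_iff.2 (neg_nonpos.2 (mul_nonneg hlam m.cast_nonneg))
    have h2 : 0 ≤ y ^ m / m.factorial :=
      div_nonneg (pow_nonneg hy m) (Nat.cast_nonneg _)
    exact mul_nonneg (mul_nonneg (by linarith) h2) (Real.exp_pos _).le
  have key : ∀ m : ℕ, (1 - Real.exp (-(lam * m))) * (y ^ m / m.factorial) * Real.exp (-y)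
      = Real.exp (-y) * (y ^ m / m.factorial) - Real.exp (-y) * ((Real.exp (-lam) * y) ^ m / m.factorial) := by
    intro m
    have h : (Real.exp (-lam) * y) ^ m = Real.exp (-(lam * m)) * y ^ m := by
      rw [mul_pow, ← Real.exp_nat_mul, show ((m:ℝ) * -lam) = -(lam * m) by ring]
    rw [h]
    ring
  have hs1 : Summable (fun m : ℕ => Real.exp (-y) * (y ^ m / m.factorial)) :=
    (Real.summable_pow_div_factorial y).mul_left _
  have hs2 : Summable (fun m : ℕ => Real.exp (-y) * ((Real.exp (-lam) * y) ^ m / m.factorial)) :=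
    (Real.summable_pow_div_factorial _).mul_left _
  have hsum : Summable (fun m : ℕ => (1 - Real.exp (-(lam * m))) * (y ^ m / m.factorial) * Real.exp (-y)) := by
    simp_rw [key]; exact hs1.sub hs2
  rw [← ENNReal.ofReal_tsum_of_nonneg hnn hsum]
  congr 1
  calc ∑' m : ℕ, (1 - Real.exp (-(lam * m))) * (y ^ m / m.factorial) * Real.exp (-y)
      = ∑' m : ℕ, (Real.exp (-y) * (y ^ m / m.factorial)
          - Real.exp (-y) * ((Real.exp (-lam) * y) ^ m / m.factorial)) := by
        exact tsum_congr key
    _ = Real.exp (-y) * Real.exp y - Real.exp (-y) * Real.exp (Real.exp (-lam) * y) := by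
        rw [Summable.tsum_sub hs1 hs2, tsum_mul_left, tsum_mul_left, aux_exp_tsum, aux_exp_tsum]
    _ = 1 - Real.exp (-((1 - Real.exp (-lam)) * y)) := by
        rw [← Real.exp_add, ← Real.exp_add, show -y + y = 0 by ring, Real.exp_zero]
        congr 2
        ring

lemma aux_dom (ν : Measure ℝ) (c α : ℝ)
    (hνlower : ∀ s : Set ℝ, MeasurableSet s →
      ∫⁻ y in s ∩ Ioi (0:ℝ), ENNReal.ofReal (c * y ^ (-1 - α)) ≤ ν s)
    (f : ℝ → ℝ≥0∞) (hf : Measurable f) :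
    ∫⁻ y in Ioi (0:ℝ), f y * ENNReal.ofReal (c * y ^ (-1-α)) ≤
      ∫⁻ y in Ioi (0:ℝ), f y ∂ν := by
  have hD : Measurable (fun y : ℝ => ENNReal.ofReal (c * y ^ (-1-α))) := by
    fun_prop
  set m₀ := (volume.restrict (Ioi (0:ℝ))).withDensity
    (fun y => ENNReal.ofReal (c * y ^ (-1-α))) with hm₀
  have hle : m₀ ≤ ν.restrict (Ioi 0) := by
    refine Measure.le_iff.2 fun s hs => ?_
    rw [hm₀, withDensity_apply _ hs, Measure.restrict_restrict hs,
      Measure.restrict_apply hs]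
    have h := hνlower (s ∩ Ioi 0) (hs.inter measurableSet_Ioi)
    rwa [inter_assoc, inter_self] at h
  calc ∫⁻ y in Ioi (0:ℝ), f y * ENNReal.ofReal (c * y ^ (-1-α))
      = ∫⁻ y, f y ∂m₀ := by
        rw [hm₀, lintegral_withDensity_eq_lintegral_mul _ hD hf]
        simp only [Pi.mul_apply]
        exact lintegral_congr fun y => mul_comm _ _
    _ ≤ ∫⁻ y, f y ∂(ν.restrict (Ioi 0)) := lintegral_mono' hle le_rfl

lemma aux_int_m (ν : Measure ℝ) (hν : ∫⁻ y in Ioi (0:ℝ), ENNReal.ofReal (min 1 y) ∂ν ≠ ⊤)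
    (m : ℕ) (hm : 1 ≤ m) :
    IntegrableOn (fun y : ℝ => y ^ m * Real.exp (-y)) (Ioi 0) ν := by
  have hmin : Integrable (fun y : ℝ => min 1 y) (ν.restrict (Ioi 0)) := by
    refine ⟨(measurable_const.min measurable_id).aestronglyMeasurable, ?_⟩
    rw [hasFiniteIntegral_iff_ofReal ?_]
    · exact Ne.lt_top hν
    · filter_upwards [ae_restrict_mem measurableSet_Ioi] with y hy
      exact le_min (by norm_num) (le_of_lt hy)
  have hm1 : (1:ℝ) ≤ (m:ℝ) := by exact_mod_cast hm
  have hmm : (1:ℝ) ≤ (m:ℝ) ^ m := one_le_pow₀ hm1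
  refine Integrable.mono' (hmin.const_mul ((m:ℝ) ^ m)) ?_ ?_
  · exact ((measurable_id.pow_const m).mul
      (Real.measurable_exp.comp measurable_neg)).aestronglyMeasurable
  · filter_upwards [ae_restrict_mem measurableSet_Ioi] with y hy
    have hy0 : (0:ℝ) ≤ y := le_of_lt hy
    have hnn : 0 ≤ y ^ m * Real.exp (-y) :=
      mul_nonneg (pow_nonneg hy0 m) (Real.exp_pos _).le
    rw [Real.norm_eq_abs, abs_of_nonneg hnn]
    have hexp1 : Real.exp (-y) ≤ 1 := Real.exp_le_one_iff.2 (by linarith)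
    rcases le_total y 1 with h | h
    · have hmin_eq : min 1 y = y := min_eq_right h
      rw [hmin_eq]
      have h1 : y ^ m * Real.exp (-y) ≤ y ^ m :=
        mul_le_of_le_one_right (pow_nonneg hy0 m) hexp1
      have h2 : y ^ m ≤ y ^ 1 := pow_le_pow_of_le_one hy0 h hm
      nlinarith
    · have hmin_eq : min 1 y = 1 := min_eq_left h
      rw [hmin_eq, mul_one]
      have hm0 : (0:ℝ) < (m:ℝ) := by linarith
      have h1 : y / m ≤ Real.exp (y / m) :=
        le_trans (by linarith [div_nonneg hy0 hm0.le]) (Real.add_one_le_exp _)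
      have h2 : (y / m) ^ m ≤ Real.exp (y / m) ^ m :=
        pow_le_pow_left₀ (div_nonneg hy0 hm0.le) h1 m
      rw [← Real.exp_nat_mul, mul_div_cancel₀ y hm0.ne'] at h2
      have h3 : y ^ m = (y / m) ^ m * (m:ℝ) ^ m := by
        rw [← mul_pow, div_mul_cancel₀ y hm0.ne']
      rw [h3]
      calc (y / m) ^ m * (m:ℝ) ^ m * Real.exp (-y)
          ≤ Real.exp y * (m:ℝ) ^ m * Real.exp (-y) := by
            refine mul_le_mul_of_nonneg_right (mul_le_mul_of_nonneg_right h2 (by positivity)) (Real.exp_pos _).le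
        _ = (m:ℝ) ^ m := by
            rw [mul_comm (Real.exp y), mul_assoc, ← Real.exp_add]
            simp

lemma aux_laplace
    (b : ℝ) (hb : 0 ≤ b) (ν : Measure ℝ)
    (hν : ∫⁻ y in Ioi (0:ℝ), ENNReal.ofReal (min 1 y) ∂ν ≠ ⊤)
    (cφ : ℕ → ℝ)
    (hcφ : ∀ m : ℕ, 1 ≤ m → cφ m =
      (1 / (Nat.factorial m : ℝ)) * ∫ y in Ioi (0:ℝ), y ^ m * Real.exp (-y) ∂ν
        + if m = 1 then b else 0)
    {Ω : Type*} [MeasurableSpace Ω] (μ : Measure Ω) [IsProbabilityMeasure μ]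
    (X : Ω → ℕ) (hX : Measurable X)
    (hXlaw : ∀ m : ℕ, 1 ≤ m → μ {ω | X ω = m} = ENNReal.ofReal (cφ m))
    (c α : ℝ) (hc : 0 < c) (hα0 : 0 < α)
    (hνlower : ∀ s : Set ℝ, MeasurableSet s →
      ∫⁻ y in s ∩ Ioi (0:ℝ), ENNReal.ofReal (c * y ^ (-1 - α)) ≤ ν s)
    {lam : ℝ} (hlam0 : 0 < lam) (hlam1 : lam ≤ 1) :
    ∫ ω, Real.exp (-(lam * (X ω : ℝ))) ∂μ ≤
      1 - (c * (1 - Real.exp (-1)) * (1 - 2 ^ (-α)) / α * Real.exp (-1) ^ α) * lam ^ α := by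
  set K : ℝ := c * (1 - Real.exp (-1)) * (1 - 2 ^ (-α)) / α with hK
  set E : ℝ := ∫ ω, Real.exp (-(lam * (X ω : ℝ))) ∂μ with hEdef
  have hXc : Measurable fun ω => ((X ω : ℕ) : ℝ) := measurable_from_nat.comp hX
  have hmeasF : Measurable fun ω => Real.exp (-(lam * (X ω : ℝ))) :=
    ((hXc.const_mul lam).neg).exp
  have hbound : ∀ ω, Real.exp (-(lam * (X ω : ℝ))) ≤ 1 := fun ω =>
    Real.exp_le_one_iff.2 (neg_nonpos.2 (mul_nonneg hlam0.le (Nat.cast_nonneg _)))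
  have hInt : Integrable (fun ω => Real.exp (-(lam * (X ω : ℝ)))) μ := by
    refine Integrable.mono' (integrable_const 1) hmeasF.aestronglyMeasurable ?_
    refine ae_of_all _ fun ω => ?_
    rw [Real.norm_eq_abs, abs_of_nonneg (Real.exp_pos _).le]
    exact hbound ω
  have hE1 : E ≤ 1 := by
    have := integral_mono hInt (integrable_const 1) hbound
    simpa using this
  have hKnn : 0 ≤ K := by
    have h2 : (2:ℝ) ^ (-α) < 1 :=
      Real.rpow_lt_one_of_one_lt_of_neg one_lt_two (by linarith)
    have he : Real.exp (-1) < 1 := Real.exp_lt_one_iff.2 (by norm_num)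
    exact div_nonneg (mul_nonneg (mul_nonneg hc.le (by linarith)) (by linarith)) hα0.le
  suffices h : ENNReal.ofReal ((K * Real.exp (-1) ^ α) * lam ^ α) ≤ ENNReal.ofReal (1 - E) by
    rw [ENNReal.ofReal_le_ofReal_iff (by linarith)] at h
    calc E ≤ 1 - K * Real.exp (-1) ^ α * lam ^ α := by linarith
      _ = _ := by ring_nf
  have hIntSub : Integrable (fun ω => 1 - Real.exp (-(lam * (X ω : ℝ)))) μ :=
    (integrable_const 1).sub hInt
  have hstep1 : ENNReal.ofReal (1 - E) =
      ∫⁻ ω, ENNReal.ofReal (1 - Real.exp (-(lam * (X ω : ℝ)))) ∂μ := by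
    rw [show (1 : ℝ) - E = ∫ ω, (1 - Real.exp (-(lam * (X ω : ℝ)))) ∂μ by
      rw [integral_sub (integrable_const 1) hInt]; simp [hEdef]]
    refine ofReal_integral_eq_lintegral_ofReal hIntSub (ae_of_all _ fun ω => ?_)
    simp only [Pi.zero_apply]
    linarith [hbound ω]
  have hstep2 : ∫⁻ ω, ENNReal.ofReal (1 - Real.exp (-(lam * (X ω : ℝ)))) ∂μ =
      ∑' m : ℕ, ENNReal.ofReal (1 - Real.exp (-(lam * (m : ℝ)))) * μ {ω | X ω = m} :=
    aux_lintegral_nat μ X hX (fun m => ENNReal.ofReal (1 - Real.exp (-(lam * (m : ℝ)))))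
  set D : ℝ → ℝ≥0∞ := fun y => ENNReal.ofReal (c * y ^ (-1-α)) with hD
  set F : ℕ → ℝ≥0∞ := fun m =>
    ∫⁻ y in Ioi (0:ℝ),
      ENNReal.ofReal ((1 - Real.exp (-(lam * (m:ℝ)))) * (y ^ m / m.factorial) * Real.exp (-y))
        * D y with hF
  have hlamm : ∀ m : ℕ, 0 ≤ 1 - Real.exp (-(lam * (m : ℝ))) := by
    intro m
    have : Real.exp (-(lam * (m : ℝ))) ≤ 1 :=
      Real.exp_le_one_iff.2 (neg_nonpos.2 (mul_nonneg hlam0.le (Nat.cast_nonneg _)))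
    linarith
  have hterm : ∀ m : ℕ, F m ≤
      ENNReal.ofReal (1 - Real.exp (-(lam * (m : ℝ)))) * μ {ω | X ω = m} := by
    intro m
    cases m with
    | zero =>
      have h0 : F 0 = 0 := by rw [hF]; simp
      rw [h0]; exact zero_le
    | succ m =>
      set m' := m + 1 with hm'
      have hm1 : 1 ≤ m' := Nat.succ_le_succ (Nat.zero_le m)
      have hfacnn : (0:ℝ) ≤ 1 / (m'.factorial : ℝ) := by positivity
      set I : ℝ := ∫ y in Ioi (0:ℝ), y ^ m' * Real.exp (-y) ∂ν with hI
      have hInonneg : 0 ≤ I := by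
        refine integral_nonneg_of_ae ?_
        filter_upwards [ae_restrict_mem measurableSet_Ioi] with y hy
        exact mul_nonneg (pow_nonneg (le_of_lt hy) _) (Real.exp_pos _).le
      have hcφ_ge : (1 / (m'.factorial : ℝ)) * I ≤ cφ m' := by
        rw [hcφ m' hm1]
        split <;> [linarith; linarith]
      have hIlin : ENNReal.ofReal I =
          ∫⁻ y in Ioi (0:ℝ), ENNReal.ofReal (y ^ m' * Real.exp (-y)) ∂ν := by
        refine ofReal_integral_eq_lintegral_ofReal (aux_int_m ν hν m' hm1) ?_
        filter_upwards [ae_restrict_mem measurableSet_Ioi] with y hy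
        exact mul_nonneg (pow_nonneg (le_of_lt hy) _) (Real.exp_pos _).le
      have hdom := aux_dom ν c α hνlower
        (fun y => ENNReal.ofReal (y ^ m' * Real.exp (-y))) (by fun_prop)
      have hpt : ∀ y : ℝ,
          ENNReal.ofReal ((1 - Real.exp (-(lam * (m':ℝ)))) * (y ^ m' / m'.factorial) * Real.exp (-y))
            = ENNReal.ofReal ((1 - Real.exp (-(lam * (m':ℝ)))) * (1 / m'.factorial))
              * ENNReal.ofReal (y ^ m' * Real.exp (-y)) := by
        intro y
        rw [← ENNReal.ofReal_mul (mul_nonneg (hlamm m') hfacnn)]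
        congr 1
        ring
      calc F m' = ENNReal.ofReal ((1 - Real.exp (-(lam * (m':ℝ)))) * (1 / m'.factorial)) *
            ∫⁻ y in Ioi (0:ℝ), ENNReal.ofReal (y ^ m' * Real.exp (-y)) * D y := by
            rw [hF, ← lintegral_const_mul' _ _ ENNReal.ofReal_ne_top]
            exact lintegral_congr fun y => by rw [hpt y, mul_assoc]
        _ ≤ ENNReal.ofReal ((1 - Real.exp (-(lam * (m':ℝ)))) * (1 / m'.factorial)) *
            ∫⁻ y in Ioi (0:ℝ), ENNReal.ofReal (y ^ m' * Real.exp (-y)) ∂ν :=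
            mul_le_mul_right hdom _
        _ = ENNReal.ofReal (1 - Real.exp (-(lam * (m':ℝ)))) *
            ENNReal.ofReal ((1 / m'.factorial : ℝ) * I) := by
            rw [← hIlin, ENNReal.ofReal_mul (hlamm m'), ENNReal.ofReal_mul hfacnn, mul_assoc]
        _ ≤ ENNReal.ofReal (1 - Real.exp (-(lam * (m':ℝ)))) * ENNReal.ofReal (cφ m') :=
            mul_le_mul_right (ENNReal.ofReal_le_ofReal hcφ_ge) _
        _ = ENNReal.ofReal (1 - Real.exp (-(lam * (m':ℝ)))) * μ {ω | X ω = m'} := by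
            rw [hXlaw m' hm1]
  -- sum over m and swap with integral
  set s : ℝ := 1 - Real.exp (-lam) with hs
  have hs0 : 0 < s := by
    have : Real.exp (-lam) < 1 := Real.exp_lt_one_iff.2 (by linarith)
    rw [hs]; linarith
  have hswap : ∑' m : ℕ, F m =
      ∫⁻ y in Ioi (0:ℝ), ENNReal.ofReal (1 - Real.exp (-(s * y))) * D y := by
    rw [hF, ← lintegral_tsum (fun m => by fun_prop)]
    refine lintegral_congr_ae ?_
    filter_upwards [ae_restrict_mem measurableSet_Ioi] with y hy
    rw [ENNReal.tsum_mul_right, aux_series lam y hlam0.le (le_of_lt hy)]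
  have hJ := aux_J c α hc hα0 hs0
  have hslow : lam * Real.exp (-1) ≤ s := by
    have h := Real.add_one_le_exp lam
    have hepos := Real.exp_pos lam
    have h2 : (lam + 1) * (Real.exp lam)⁻¹ ≤ 1 := by
      have := mul_le_mul_of_nonneg_right h (inv_nonneg.2 hepos.le)
      rwa [mul_inv_cancel₀ hepos.ne'] at this
    have h3 : lam * Real.exp (-lam) ≤ s := by
      rw [hs, Real.exp_neg]
      nlinarith
    have h4 : Real.exp (-1) ≤ Real.exp (-lam) := Real.exp_le_exp.2 (by linarith)
    nlinarith
  have hsrpow : (K * Real.exp (-1) ^ α) * lam ^ α ≤ K * s ^ α := by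
    have h1 : (lam * Real.exp (-1)) ^ α ≤ s ^ α :=
      Real.rpow_le_rpow (mul_nonneg hlam0.le (Real.exp_pos _).le) hslow hα0.le
    rw [Real.mul_rpow hlam0.le (Real.exp_pos _).le] at h1
    calc (K * Real.exp (-1) ^ α) * lam ^ α = K * (lam ^ α * Real.exp (-1) ^ α) := by ring
      _ ≤ K * s ^ α := mul_le_mul_of_nonneg_left h1 hKnn
  calc ENNReal.ofReal ((K * Real.exp (-1) ^ α) * lam ^ α)
      ≤ ENNReal.ofReal (K * s ^ α) := ENNReal.ofReal_le_ofReal hsrpow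
    _ ≤ ∫⁻ y in Ioi (0:ℝ), ENNReal.ofReal (1 - Real.exp (-(s * y))) * D y := hJ
    _ = ∑' m : ℕ, F m := hswap.symm
    _ ≤ ∑' m : ℕ, ENNReal.ofReal (1 - Real.exp (-(lam * (m : ℝ)))) * μ {ω | X ω = m} :=
        ENNReal.tsum_le_tsum hterm
    _ = ENNReal.ofReal (1 - E) := by rw [hstep1, hstep2]

set_option maxHeartbeats 1000000 in
theorem subexponential_moment_estimate
    (b : ℝ) (hb : 0 ≤ b) (ν : Measure ℝ)
    (hν : ∫⁻ y in Ioi (0:ℝ), ENNReal.ofReal (min 1 y) ∂ν ≠ ⊤)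
    (φ : ℝ → ℝ)
    (hφ : ∀ x : ℝ, 0 ≤ x → φ x = b * x + ∫ y in Ioi (0:ℝ), (1 - Real.exp (-x * y)) ∂ν)
    (hφ1 : φ 1 = 1)
    (cφ : ℕ → ℝ)
    (hcφ : ∀ m : ℕ, 1 ≤ m → cφ m =
      (1 / (Nat.factorial m : ℝ)) * ∫ y in Ioi (0:ℝ), y ^ m * Real.exp (-y) ∂ν
        + if m = 1 then b else 0)
    {Ω : Type*} [MeasurableSpace Ω] (μ : Measure Ω) [IsProbabilityMeasure μ]
    (R : ℕ → Ω → ℕ) (hR : ∀ k, Measurable (R k))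
    (hRindep : iIndepFun R μ)
    (hRpos : ∀ k ω, 1 ≤ R k ω)
    (hRlaw : ∀ k, ∀ m : ℕ, 1 ≤ m → μ {ω | R k ω = m} = ENNReal.ofReal (cφ m))
    (T : ℕ → Ω → ℕ) (hT : ∀ n ω, T n ω = ∑ k ∈ Finset.range n, R k ω)
    (c α : ℝ) (hc : 0 < c) (hα0 : 0 < α) (hα1 : α < 1)
    (hνlower : ∀ s : Set ℝ, MeasurableSet s →
      ∫⁻ y in s ∩ Ioi (0:ℝ), ENNReal.ofReal (c * y ^ (-1 - α)) ≤ ν s)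
    (θ δ : ℝ) (hθ : 0 < θ) (hδ0 : 0 < δ) (hδ1 : δ ≤ 1) :
    ∃ C : ℝ, 0 < C ∧ ∃ N : ℕ, ∀ n : ℕ, N ≤ n →
      ∫ ω, Real.exp (-θ * (T n ω : ℝ) ^ δ) ∂μ ≤
        Real.exp (-C * (n : ℝ) ^ (δ / (α * (1 - δ) + δ))) := by
  -- constants
  set K2 : ℝ := c * (1 - Real.exp (-1)) * (1 - 2 ^ (-α)) / α * Real.exp (-1) ^ α with hK2
  have h2α : (2:ℝ) ^ (-α) < 1 :=
    Real.rpow_lt_one_of_one_lt_of_neg one_lt_two (by linarith)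
  have heα : Real.exp (-1) < 1 := Real.exp_lt_one_iff.2 (by norm_num)
  have hK2pos : 0 < K2 := by
    apply mul_pos
    · exact div_pos (mul_pos (mul_pos hc (by linarith)) (by linarith)) hα0
    · exact Real.rpow_pos_of_pos (Real.exp_pos _) α
  set d : ℝ := α * (1 - δ) + δ with hd_def
  have hd0 : 0 < d := by
    have h := mul_nonneg hα0.le (by linarith : (0:ℝ) ≤ 1 - δ)
    rw [hd_def]; linarith
  have hd1 : d ≤ 1 := by
    have h := mul_le_of_le_one_left (by linarith : (0:ℝ) ≤ 1 - δ) hα1.le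
    rw [hd_def]; linarith
  set γ : ℝ := 1 / d with hγ
  have hγ1 : 1 ≤ γ := by rw [hγ, le_div_iff₀ hd0]; linarith
  set β : ℝ := δ / d with hβ
  have hβpos : 0 < β := div_pos hδ0 hd0
  have hγδ : γ * δ = β := by rw [hγ, hβ]; ring
  set e : ℝ := (1 - γ) / (1 - α) with he
  have h1α : (1:ℝ) - α ≠ 0 := ne_of_gt (by linarith : (0:ℝ) < 1 - α)
  have hdne : α * (1 - δ) + δ ≠ 0 := by rw [← hd_def]; exact hd0.ne'
  have he0 : e ≤ 0 := div_nonpos_iff.2 (Or.inr ⟨by linarith, by linarith⟩)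
  have heβ : 1 + e * α = β := by
    rw [he, hβ, hγ, hd_def]
    field_simp
    ring
  have heγβ : e + γ = β := by
    rw [he, hβ, hγ, hd_def]
    field_simp
    ring
  set m₀ : ℝ := min 1 ((K2/2) ^ ((1:ℝ)/(1-α))) with hm₀
  have hm₀pos : 0 < m₀ :=
    lt_min one_pos (Real.rpow_pos_of_pos (by linarith) _)
  have hm₀1 : m₀ ≤ 1 := min_le_left _ _
  have hm₀K : m₀ ^ (1 - α) ≤ K2 / 2 := by
    have h1 : m₀ ^ (1-α) ≤ ((K2/2) ^ ((1:ℝ)/(1-α))) ^ (1-α) :=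
      Real.rpow_le_rpow hm₀pos.le (min_le_right _ _) (by linarith)
    rwa [← Real.rpow_mul (by linarith : (0:ℝ) ≤ K2/2), one_div_mul_cancel (by linarith : (1:ℝ)-α ≠ 0), Real.rpow_one] at h1
  set C1 : ℝ := K2 / 2 * m₀ ^ α with hC1
  have hC1pos : 0 < C1 := mul_pos (by linarith) (Real.rpow_pos_of_pos hm₀pos α)
  set C2 : ℝ := min θ C1 with hC2
  have hC2pos : 0 < C2 := lt_min hθ hC1pos
  refine ⟨C2 / 2, by linarith, ?_⟩
  set A : ℝ := max (2 * Real.log 2 / C2) 1 with hA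
  have hA1 : 1 ≤ A := le_max_right _ _
  refine ⟨max 1 ⌈A ^ (1/β)⌉₊, fun n hn => ?_⟩
  have hn1 : 1 ≤ n := le_trans (le_max_left _ _) hn
  have hn1' : (1:ℝ) ≤ (n:ℝ) := by exact_mod_cast hn1
  have hn0 : (0:ℝ) < (n:ℝ) := by linarith
  -- choose lambda and r
  set lam : ℝ := m₀ * (n:ℝ) ^ e with hlam
  set r : ℝ := (n:ℝ) ^ γ with hr
  have hne_pos : 0 < (n:ℝ) ^ e := Real.rpow_pos_of_pos hn0 e
  have hlam0 : 0 < lam := mul_pos hm₀pos hne_pos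
  have hlam1 : lam ≤ 1 := by
    have h1 : (n:ℝ) ^ e ≤ 1 := Real.rpow_le_one_of_one_le_of_nonpos hn1' he0
    calc lam ≤ m₀ * 1 := mul_le_mul_of_nonneg_left h1 hm₀pos.le
      _ ≤ 1 := by linarith
  have hr0 : 0 < r := Real.rpow_pos_of_pos hn0 γ
  -- measurability of T
  have hTc : Measurable fun ω => ((T n ω : ℕ) : ℝ) := by
    have : (fun ω => ((T n ω : ℕ) : ℝ)) = fun ω => ∑ k ∈ Finset.range n, ((R k ω : ℕ) : ℝ) := by
      funext ω; rw [hT]; push_cast; ring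
    rw [this]
    exact Finset.measurable_sum _ fun k _ => measurable_from_nat.comp (hR k)
  have hTnn : ∀ ω, (0:ℝ) ≤ ((T n ω : ℕ) : ℝ) := fun ω => Nat.cast_nonneg _
  -- Laplace bound for T n
  have hmgf : ∫ ω, Real.exp (-(lam * (T n ω : ℝ))) ∂μ ≤ Real.exp (-(K2 * lam ^ α) * n) := by
    have hXc : ∀ k, Measurable fun ω => ((R k ω : ℕ) : ℝ) :=
      fun k => measurable_from_nat.comp (hR k)
    have hXindep : iIndepFun (fun k ω => ((R k ω : ℕ) : ℝ)) μ :=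
      hRindep.comp _ fun k => measurable_from_nat
    have h1 : ∫ ω, Real.exp (-(lam * (T n ω : ℝ))) ∂μ
        = mgf (∑ k ∈ Finset.range n, fun ω => ((R k ω : ℕ) : ℝ)) μ (-lam) := by
      rw [mgf]
      refine integral_congr_ae (ae_of_all _ fun ω => ?_)
      simp only [Finset.sum_apply, hT n ω]
      push_cast
      ring_nf
    rw [h1, iIndepFun.mgf_sum hXindep hXc (Finset.range n)]
    have hone : ∀ k, mgf (fun ω => ((R k ω : ℕ) : ℝ)) μ (-lam) ≤ 1 - K2 * lam ^ α := by
      intro k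
      have := aux_laplace b hb ν hν cφ hcφ μ (R k) (hR k) (hRlaw k) c α hc hα0 hνlower hlam0 hlam1
      rw [mgf]
      refine le_trans (le_of_eq ?_) this
      refine integral_congr_ae (ae_of_all _ fun ω => ?_)
      ring_nf
    have hnn : 0 ≤ 1 - K2 * lam ^ α := le_trans mgf_nonneg (hone 0)
    calc ∏ k ∈ Finset.range n, mgf (fun ω => ((R k ω : ℕ) : ℝ)) μ (-lam)
        ≤ ∏ _k ∈ Finset.range n, (1 - K2 * lam ^ α) :=
          Finset.prod_le_prod (fun k _ => mgf_nonneg) (fun k _ => hone k)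
      _ = (1 - K2 * lam ^ α) ^ n := by rw [Finset.prod_const, Finset.card_range]
      _ ≤ Real.exp (-(K2 * lam ^ α)) ^ n := by
          refine pow_le_pow_left₀ hnn ?_ n
          have := Real.add_one_le_exp (-(K2 * lam ^ α))
          linarith
      _ = Real.exp (-(K2 * lam ^ α) * n) := by
          rw [← Real.exp_nat_mul]; ring_nf
  -- splitting
  have hIntLap : Integrable (fun ω => Real.exp (-(lam * (T n ω : ℝ)))) μ := by
    refine Integrable.mono' (integrable_const 1)
      (((hTc.const_mul lam).neg).exp).aestronglyMeasurable (ae_of_all _ fun ω => ?_)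
    rw [Real.norm_eq_abs, abs_of_nonneg (Real.exp_pos _).le]
    exact Real.exp_le_one_iff.2 (neg_nonpos.2 (mul_nonneg hlam0.le (hTnn ω)))
  have hIntLHS : Integrable (fun ω => Real.exp (-θ * (T n ω : ℝ) ^ δ)) μ := by
    have hm : Measurable fun ω => Real.exp (-θ * (T n ω : ℝ) ^ δ) :=
      ((hTc.pow measurable_const).const_mul (-θ)).exp
    refine Integrable.mono' (integrable_const 1) hm.aestronglyMeasurable (ae_of_all _ fun ω => ?_)
    rw [Real.norm_eq_abs, abs_of_nonneg (Real.exp_pos _).le]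
    refine Real.exp_le_one_iff.2 ?_
    have h := mul_nonneg hθ.le (Real.rpow_nonneg (hTnn ω) δ)
    linarith
  have hsplit : ∫ ω, Real.exp (-θ * (T n ω : ℝ) ^ δ) ∂μ ≤
      Real.exp (-θ * r ^ δ) + Real.exp (lam * r) * ∫ ω, Real.exp (-(lam * (T n ω : ℝ))) ∂μ := by
    have hptw : ∀ ω, Real.exp (-θ * (T n ω : ℝ) ^ δ) ≤
        Real.exp (-θ * r ^ δ) + Real.exp (lam * r) * Real.exp (-(lam * (T n ω : ℝ))) := by
      intro ω
      set t : ℝ := (T n ω : ℝ) with ht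
      rcases le_total r t with h | h
      · have h1 : r ^ δ ≤ t ^ δ := Real.rpow_le_rpow hr0.le h hδ0.le
        have h2 : Real.exp (-θ * t ^ δ) ≤ Real.exp (-θ * r ^ δ) :=
          Real.exp_le_exp.2 (by
            have := mul_le_mul_of_nonneg_left h1 hθ.le
            linarith)
        have h3 : 0 < Real.exp (lam * r) * Real.exp (-(lam * t)) :=
          mul_pos (Real.exp_pos _) (Real.exp_pos _)
        linarith
      · have h1 : Real.exp (-θ * t ^ δ) ≤ 1 := by
          refine Real.exp_le_one_iff.2 ?_
          have hh := mul_nonneg hθ.le (Real.rpow_nonneg (hTnn ω) δ)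
          linarith
        have h2 : (1:ℝ) ≤ Real.exp (lam * r) * Real.exp (-(lam * t)) := by
          rw [← Real.exp_add]
          refine Real.one_le_exp_iff.2 ?_
          have hh := mul_le_mul_of_nonneg_left h hlam0.le
          linarith
        have h3 : 0 < Real.exp (-θ * r ^ δ) := Real.exp_pos _
        linarith
    calc ∫ ω, Real.exp (-θ * (T n ω : ℝ) ^ δ) ∂μ
        ≤ ∫ ω, (Real.exp (-θ * r ^ δ) + Real.exp (lam * r) * Real.exp (-(lam * (T n ω : ℝ)))) ∂μ :=
          integral_mono hIntLHS ((integrable_const _).add (hIntLap.const_mul _)) hptw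
      _ = Real.exp (-θ * r ^ δ) + Real.exp (lam * r) * ∫ ω, Real.exp (-(lam * (T n ω : ℝ))) ∂μ := by
          rw [integral_add (integrable_const _) (hIntLap.const_mul _), integral_const,
            integral_const_mul]
          simp
  -- arithmetic
  have hnβ : (0:ℝ) < (n:ℝ) ^ β := Real.rpow_pos_of_pos hn0 β
  have hlamα : lam ^ α = m₀ ^ α * (n:ℝ) ^ (e * α) := by
    rw [hlam, Real.mul_rpow hm₀pos.le hne_pos.le, ← Real.rpow_mul hn0.le]
  have hnlamα : (n:ℝ) * lam ^ α = m₀ ^ α * (n:ℝ) ^ β := by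
    rw [hlamα, ← heβ, Real.rpow_add hn0, Real.rpow_one]
    ring
  have hlamr : lam * r = m₀ * (n:ℝ) ^ β := by
    rw [hlam, hr, mul_assoc, ← Real.rpow_add hn0, heγβ]
  have hlamr_le : lam * r ≤ K2 / 2 * ((n:ℝ) * lam ^ α) := by
    rw [hlamr, hnlamα]
    have h1 : m₀ = m₀ ^ α * m₀ ^ (1 - α) := by
      rw [← Real.rpow_add hm₀pos]
      norm_num
    have h2 : m₀ ^ α * m₀ ^ (1-α) ≤ m₀ ^ α * (K2/2) :=
      mul_le_mul_of_nonneg_left hm₀K (Real.rpow_pos_of_pos hm₀pos α).le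
    calc m₀ * (n:ℝ) ^ β = (m₀ ^ α * m₀ ^ (1-α)) * (n:ℝ) ^ β := by rw [← h1]
      _ ≤ (m₀ ^ α * (K2/2)) * (n:ℝ) ^ β := mul_le_mul_of_nonneg_right h2 hnβ.le
      _ = K2 / 2 * (m₀ ^ α * (n:ℝ) ^ β) := by ring
  have hterm2 : Real.exp (lam * r) * Real.exp (-(K2 * lam ^ α) * n) ≤
      Real.exp (-C1 * (n:ℝ) ^ β) := by
    rw [← Real.exp_add]
    refine Real.exp_le_exp.2 ?_
    calc lam * r + -(K2 * lam ^ α) * n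
        = lam * r - K2 * ((n:ℝ) * lam ^ α) := by ring
      _ ≤ K2/2 * ((n:ℝ) * lam ^ α) - K2 * ((n:ℝ) * lam ^ α) := by linarith [hlamr_le]
      _ = -(K2/2) * ((n:ℝ) * lam ^ α) := by ring
      _ = -C1 * (n:ℝ) ^ β := by rw [hnlamα, hC1]; ring
  have hterm1 : Real.exp (-θ * r ^ δ) = Real.exp (-θ * (n:ℝ) ^ β) := by
    rw [hr, ← Real.rpow_mul hn0.le, hγδ]
  -- combine
  have hboth : ∫ ω, Real.exp (-θ * (T n ω : ℝ) ^ δ) ∂μ ≤ 2 * Real.exp (-C2 * (n:ℝ) ^ β) := by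
    have hθβ : Real.exp (-θ * (n:ℝ) ^ β) ≤ Real.exp (-C2 * (n:ℝ) ^ β) := by
      refine Real.exp_le_exp.2 ?_
      have h := mul_le_mul_of_nonneg_right (min_le_left θ C1) hnβ.le
      linarith
    have hC1β : Real.exp (-C1 * (n:ℝ) ^ β) ≤ Real.exp (-C2 * (n:ℝ) ^ β) := by
      refine Real.exp_le_exp.2 ?_
      have h := mul_le_mul_of_nonneg_right (min_le_right θ C1) hnβ.le
      linarith
    calc ∫ ω, Real.exp (-θ * (T n ω : ℝ) ^ δ) ∂μ
        ≤ Real.exp (-θ * r ^ δ) + Real.exp (lam * r) * ∫ ω, Real.exp (-(lam * (T n ω : ℝ))) ∂μ := hsplit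
      _ ≤ Real.exp (-θ * r ^ δ) + Real.exp (lam * r) * Real.exp (-(K2 * lam ^ α) * n) := by
          refine add_le_add_right (mul_le_mul_of_nonneg_left hmgf (Real.exp_pos _).le) _
      _ ≤ Real.exp (-C2 * (n:ℝ) ^ β) + Real.exp (-C2 * (n:ℝ) ^ β) := by
          rw [hterm1]
          exact add_le_add hθβ (le_trans hterm2 hC1β)
      _ = 2 * Real.exp (-C2 * (n:ℝ) ^ β) := by ring
  -- absorb the factor 2
  have hnA : A ≤ (n:ℝ) ^ β := by
    have h1 : (A ^ (1/β) : ℝ) ≤ (n:ℝ) := by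
      have h2 : (⌈A ^ (1/β)⌉₊ : ℝ) ≤ (n:ℝ) := by
        exact_mod_cast le_trans (le_max_right 1 _) hn
      exact le_trans (Nat.le_ceil _) h2
    have h3 : (A ^ (1/β)) ^ β ≤ (n:ℝ) ^ β :=
      Real.rpow_le_rpow (Real.rpow_nonneg (by linarith) _) h1 hβpos.le
    rwa [← Real.rpow_mul (by linarith : (0:ℝ) ≤ A), one_div_mul_cancel hβpos.ne',
      Real.rpow_one] at h3
  have hlog : Real.log 2 ≤ C2 / 2 * (n:ℝ) ^ β := by
    have h1 : 2 * Real.log 2 / C2 ≤ (n:ℝ) ^ β := le_trans (le_max_left _ _) hnA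
    rw [div_le_iff₀ hC2pos] at h1
    linarith
  have h2exp : 2 * Real.exp (-C2 * (n:ℝ) ^ β) ≤ Real.exp (-(C2/2) * (n:ℝ) ^ β) := by
    have key : Real.exp (-(C2/2) * (n:ℝ) ^ β) ≤ 1/2 := by
      rw [show -(C2/2) * (n:ℝ) ^ β = -(C2/2 * (n:ℝ) ^ β) by ring, Real.exp_neg]
      rw [inv_le_comm₀ (Real.exp_pos _) (by norm_num)]
      calc (1/2 : ℝ)⁻¹ = 2 := by norm_num
        _ = Real.exp (Real.log 2) := (Real.exp_log (by norm_num)).symm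
        _ ≤ Real.exp (C2/2 * (n:ℝ) ^ β) := Real.exp_le_exp.2 hlog
    have hsplit2 : -C2 * (n:ℝ) ^ β = -(C2/2) * (n:ℝ) ^ β + -(C2/2) * (n:ℝ) ^ β := by ring
    rw [hsplit2, Real.exp_add]
    set x : ℝ := Real.exp (-(C2/2) * (n:ℝ) ^ β) with hx
    have hxpos : 0 < x := Real.exp_pos _
    calc 2 * (x * x) = (2 * x) * x := by ring
      _ ≤ 1 * x := mul_le_mul_of_nonneg_right (by linarith) hxpos.le
      _ = x := one_mul x
  calc ∫ ω, Real.exp (-θ * (T n ω : ℝ) ^ δ) ∂μ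
      ≤ 2 * Real.exp (-C2 * (n:ℝ) ^ β) := hboth
    _ ≤ Real.exp (-(C2/2) * (n:ℝ) ^ β) := h2exp
    _ = Real.exp (-(C2/2) * (n:ℝ) ^ (δ / (α * (1 - δ) + δ))) := by rw [hβ, hd_def]
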